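/- For every real x with 0 < x < 1/2, each of the four complex numbers (1/2)(1 ± √(1 - 8x² ± 4√(4x⁴ - x²))) (all four sign combinations, where √ denotes a complex square root) has modulus at most 1. -/

import Mathlib

/-- For every real `x` with `0 < x < 1/2`, each of the four complex
numbers `(1/2)(1 ± √(1 - 8x² ± 4√(4x⁴ - x²)))` (all four sign combinations, for any
choices of the complex square roots) has modulus at most `1`. -/
theorem ogda_example_eigenvalues_bounded (x : ℝ) (hx : 0 < x) (hx' : x < 1 / 2) :
    ∀ s t : ℂ, s ^ 2 = ((4 * x ^ 4 - x ^ 2 : ℝ) : ℂ) →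
      t ^ 2 = 1 - 8 * (x : ℂ) ^ 2 + 4 * s →
      ‖(1 / 2 : ℂ) * (1 + t)‖ ≤ 1 ∧ ‖(1 / 2 : ℂ) * (1 - t)‖ ≤ 1 := by
  intro s t hs ht
  have hx2 : x ^ 2 < 1 / 4 := by nlinarith
  have hneg : (4 * x ^ 4 - x ^ 2 : ℝ) < 0 := by nlinarith [mul_pos hx hx, hx2]
  -- real and imaginary parts of s
  have hsre : (s ^ 2).re = 4 * x ^ 4 - x ^ 2 := by rw [hs, Complex.ofReal_re]
  have hsim : (s ^ 2).im = 0 := by rw [hs, Complex.ofReal_im]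
  
  rw [sq, Complex.mul_re] at hsre
  rw [sq, Complex.mul_im] at hsim
  have hprod : s.re * s.im = 0 := by linarith
  have hre0 : s.re = 0 := by
    rcases mul_eq_zero.mp hprod with h | h
    · exact h
    · exfalso; rw [h] at hsre; nlinarith [sq_nonneg s.re]
  have him : s.im ^ 2 = x ^ 2 - 4 * x ^ 4 := by nlinarith
  -- parts of t^2
  have htre : (t ^ 2).re = 1 - 8 * x ^ 2 := by
    rw [ht]; simp [Complex.add_re, Complex.mul_re, hre0, ← Complex.ofReal_pow]
  have htim : (t ^ 2).im = 4 * s.im := by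
    rw [ht]; simp [Complex.add_im, Complex.mul_im, hre0, ← Complex.ofReal_pow]
  have hnsq : Complex.normSq (t ^ 2) = 1 := by
    rw [Complex.normSq_apply, htre, htim]; nlinarith
  have habs : ‖t‖ = 1 := by
    have h2 : ‖t ^ 2‖ = 1 := by
      have h := Complex.sq_norm (t ^ 2)
      rw [hnsq] at h
      have h0 := norm_nonneg (t ^ 2)
      have : ‖t ^ 2‖ = 1 := by nlinarith
      simpa using this
    rw [norm_pow] at h2
    nlinarith [norm_nonneg t]
  constructor
  · calc ‖(1 / 2 : ℂ) * (1 + t)‖ = (1 / 2) * ‖(1 : ℂ) + t‖ := by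
          rw [norm_mul]; norm_num
    _ ≤ (1 / 2) * (‖(1 : ℂ)‖ + ‖t‖) := by
          gcongr; exact norm_add_le _ _
    _ = 1 := by rw [habs]; norm_num
  · calc ‖(1 / 2 : ℂ) * (1 - t)‖ = (1 / 2) * ‖(1 : ℂ) - t‖ := by
          rw [norm_mul]; norm_num
    _ ≤ (1 / 2) * (‖(1 : ℂ)‖ + ‖t‖) := by
          gcongr; exact norm_sub_le _ _
    _ = 1 := by rw [habs]; norm_num
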